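/- Let L ≥ 6 and x_1 = (1,1,0,1,0,...,0), x_2 = (1,0,1,1,0,...,0) in {0,1}^L. Then sum over k in Z_L^3 of (A_k(x_1) − A_k(x_2))^2 = 12/L. -/

import Mathlib

noncomputable def autocorr {L : ℕ} [NeZero L] {d : ℕ} (k : Fin d → ZMod L)
    (x : ZMod L → ℝ) : ℝ :=
  (1 / (L : ℝ)) * ∑ s : ZMod L, ∏ i, x (k i + s)

/-- `x₁ = (1,1,0,1,0,…,0)`, with ones at positions `0,1,3` (0-indexed). -/
noncomputable def xOne (L : ℕ) : ZMod L → ℝ :=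
  fun j => if j = 0 ∨ j = 1 ∨ j = 3 then 1 else 0

/-- `x₂ = (1,0,1,1,0,…,0)`, with ones at positions `0,2,3` (0-indexed). -/
noncomputable def xTwo (L : ℕ) : ZMod L → ℝ :=
  fun j => if j = 0 ∨ j = 2 ∨ j = 3 then 1 else 0

lemma sum_autocorr_mul {L : ℕ} [NeZero L] (x y : ZMod L → ℝ) :
    ∑ k : Fin 3 → ZMod L, autocorr k x * autocorr k y
      = (1 / (L:ℝ)) * ∑ d : ZMod L, (∑ v : ZMod L, x v * y (v + d)) ^ 3 := by
  have hL : (L:ℝ) ≠ 0 := Nat.cast_ne_zero.mpr (NeZero.ne L)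
  calc ∑ k : Fin 3 → ZMod L, autocorr k x * autocorr k y
      = ∑ k : Fin 3 → ZMod L, (1/(L:ℝ))^2 * ∑ s : ZMod L, ∑ t : ZMod L,
          ∏ i : Fin 3, (x (k i + s) * y (k i + t)) := by
        refine Finset.sum_congr rfl fun k _ => ?_
        simp only [autocorr]
        rw [mul_mul_mul_comm, Finset.sum_mul_sum]
        simp only [← Finset.prod_mul_distrib]
        ring
    _ = (1/(L:ℝ))^2 * ∑ s : ZMod L, ∑ t : ZMod L, ∑ k : Fin 3 → ZMod L,
          ∏ i : Fin 3, (x (k i + s) * y (k i + t)) := by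
        rw [← Finset.mul_sum]
        congr 1
        rw [Finset.sum_comm]
        exact Finset.sum_congr rfl fun s _ => Finset.sum_comm
    _ = (1/(L:ℝ))^2 * ∑ s : ZMod L, ∑ t : ZMod L,
          (∑ u : ZMod L, x (u + s) * y (u + t)) ^ 3 := by
        congr 1
        refine Finset.sum_congr rfl fun s _ => Finset.sum_congr rfl fun t _ => ?_
        rw [Fintype.sum_pow]
    _ = (1/(L:ℝ))^2 * ∑ s : ZMod L, ∑ t : ZMod L,
          (∑ v : ZMod L, x v * y (v + (t - s))) ^ 3 := by
        congr 1
        refine Finset.sum_congr rfl fun s _ => Finset.sum_congr rfl fun t _ => ?_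
        congr 1
        refine Fintype.sum_equiv (Equiv.addRight s) _ _ fun u => ?_
        simp only [Equiv.coe_addRight]
        rw [show u + s + (t - s) = u + t from by ring]
    _ = (1/(L:ℝ))^2 * ∑ s : ZMod L, ∑ d : ZMod L,
          (∑ v : ZMod L, x v * y (v + d)) ^ 3 := by
        congr 1
        refine Finset.sum_congr rfl fun s _ => ?_
        exact Fintype.sum_equiv (Equiv.subRight s) _ _ fun t => rfl
    _ = (1/(L:ℝ))^2 * (L * ∑ d : ZMod L, (∑ v : ZMod L, x v * y (v + d)) ^ 3) := by
        rw [Finset.sum_const, Finset.card_univ, ZMod.card, nsmul_eq_mul]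
    _ = (1/(L:ℝ)) * ∑ d : ZMod L, (∑ v : ZMod L, x v * y (v + d)) ^ 3 := by
        field_simp



lemma sum_sq_expand {L : ℕ} [NeZero L] (x y : ZMod L → ℝ) :
    ∑ k : Fin 3 → ZMod L, (autocorr k x - autocorr k y) ^ 2
      = (1 / (L:ℝ)) * ∑ d : ZMod L,
          ((∑ v : ZMod L, x v * x (v + d)) ^ 3
            - 2 * (∑ v : ZMod L, x v * y (v + d)) ^ 3
            + (∑ v : ZMod L, y v * y (v + d)) ^ 3) := by
  have e1 := sum_autocorr_mul x x
  have e2 := sum_autocorr_mul x y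
  have e3 := sum_autocorr_mul y y
  calc ∑ k : Fin 3 → ZMod L, (autocorr k x - autocorr k y) ^ 2
      = ∑ k : Fin 3 → ZMod L, (autocorr k x * autocorr k x
          - 2 * (autocorr k x * autocorr k y) + autocorr k y * autocorr k y) :=
        Finset.sum_congr rfl fun k _ => by ring
    _ = (∑ k : Fin 3 → ZMod L, autocorr k x * autocorr k x)
          - 2 * (∑ k : Fin 3 → ZMod L, autocorr k x * autocorr k y)
          + ∑ k : Fin 3 → ZMod L, autocorr k y * autocorr k y := by
        rw [Finset.sum_add_distrib, Finset.sum_sub_distrib, ← Finset.mul_sum]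
    _ = _ := by
        rw [e1, e2, e3, Finset.sum_add_distrib, Finset.sum_sub_distrib,
          ← Finset.mul_sum]
        ring

lemma zmod_ne_of {L : ℕ} [NeZero L] {a b : ℤ} (h1 : a ≠ b) (h2 : (a - b).natAbs < L) :
    (a : ZMod L) ≠ (b : ZMod L) := by
  intro h
  rw [ZMod.intCast_eq_intCast_iff] at h
  have hd : (L:ℤ) ∣ b - a := Int.ModEq.dvd h
  have hdn : L ∣ (b - a).natAbs := by
    have := Int.natAbs_dvd_natAbs.mpr hd
    simpa using this
  have hpos : (b - a).natAbs ≠ 0 := Int.natAbs_ne_zero.mpr (sub_ne_zero.mpr (Ne.symm h1))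
  have := Nat.le_of_dvd (Nat.pos_of_ne_zero hpos) hdn
  omega

lemma corr_one {L : ℕ} [NeZero L] (hL : 6 ≤ L) (y : ZMod L → ℝ) (d : ZMod L) :
    ∑ v : ZMod L, xOne L v * y (v + d) = y (0 + d) + (y (1 + d) + y (3 + d)) := by
  have h01 : (0 : ZMod L) ≠ 1 := by
    have := zmod_ne_of (L:=L) (a:=0) (b:=1) (by norm_num) (by omega); simpa using this
  have h03 : (0 : ZMod L) ≠ 3 := by
    have := zmod_ne_of (L:=L) (a:=0) (b:=3) (by norm_num) (by omega); simpa using this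
  have h13 : (1 : ZMod L) ≠ 3 := by
    have := zmod_ne_of (L:=L) (a:=1) (b:=3) (by norm_num) (by omega); simpa using this
  calc ∑ v : ZMod L, xOne L v * y (v + d)
      = ∑ v : ZMod L, ((if v = 0 then y (v+d) else 0)
          + ((if v = 1 then y (v+d) else 0) + (if v = 3 then y (v+d) else 0))) := by
        refine Finset.sum_congr rfl fun v _ => ?_
        by_cases hv0 : v = 0 <;> by_cases hv1 : v = 1 <;> by_cases hv3 : v = 3 <;>
          simp_all [xOne]
    _ = y (0 + d) + (y (1 + d) + y (3 + d)) := by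
        rw [Finset.sum_add_distrib, Finset.sum_add_distrib]
        simp [Finset.sum_ite_eq']

lemma corr_two {L : ℕ} [NeZero L] (hL : 6 ≤ L) (y : ZMod L → ℝ) (d : ZMod L) :
    ∑ v : ZMod L, xTwo L v * y (v + d) = y (0 + d) + (y (2 + d) + y (3 + d)) := by
  have h02 : (0 : ZMod L) ≠ 2 := by
    have := zmod_ne_of (L:=L) (a:=0) (b:=2) (by norm_num) (by omega); simpa using this
  have h03 : (0 : ZMod L) ≠ 3 := by
    have := zmod_ne_of (L:=L) (a:=0) (b:=3) (by norm_num) (by omega); simpa using this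
  have h23 : (2 : ZMod L) ≠ 3 := by
    have := zmod_ne_of (L:=L) (a:=2) (b:=3) (by norm_num) (by omega); simpa using this
  calc ∑ v : ZMod L, xTwo L v * y (v + d)
      = ∑ v : ZMod L, ((if v = 0 then y (v+d) else 0)
          + ((if v = 2 then y (v+d) else 0) + (if v = 3 then y (v+d) else 0))) := by
        refine Finset.sum_congr rfl fun v _ => ?_
        by_cases hv0 : v = 0 <;> by_cases hv2 : v = 2 <;> by_cases hv3 : v = 3 <;>
          simp_all [xTwo]
    _ = y (0 + d) + (y (2 + d) + y (3 + d)) := by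
        rw [Finset.sum_add_distrib, Finset.sum_add_distrib]
        simp [Finset.sum_ite_eq']

lemma main_count {L : ℕ} [NeZero L] (hL : 6 ≤ L) :
    ∑ d : ZMod L, ((xOne L (0 + d) + (xOne L (1 + d) + xOne L (3 + d))) ^ 3 - 2 * (xTwo L (0 + d) + (xTwo L (1 + d) + xTwo L (3 + d))) ^ 3 + (xTwo L (0 + d) + (xTwo L (2 + d) + xTwo L (3 + d))) ^ 3) = 12 := by
  have hz1 : ∀ j : ZMod L, j ≠ 0 → j ≠ 1 → j ≠ 3 → xOne L j = 0 := by
    intro j a b c; simp [xOne, a, b, c]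
  have hz2 : ∀ j : ZMod L, j ≠ 0 → j ≠ 2 → j ≠ 3 → xTwo L j = 0 := by
    intro j a b c; simp [xTwo, a, b, c]
  have hvan : ∀ d ∈ (Finset.univ : Finset (ZMod L)),
      d ∉ ({0, 1, 2, 3, -1, -2, -3} : Finset (ZMod L)) →
      ((xOne L (0 + d) + (xOne L (1 + d) + xOne L (3 + d))) ^ 3 - 2 * (xTwo L (0 + d) + (xTwo L (1 + d) + xTwo L (3 + d))) ^ 3 + (xTwo L (0 + d) + (xTwo L (2 + d) + xTwo L (3 + d))) ^ 3) = 0 := by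
    intro d _ hd
    simp only [Finset.mem_insert, Finset.mem_singleton, not_or] at hd
    obtain ⟨hd0, hd1, hd2, hd3, hdm1, hdm2, hdm3⟩ := hd
    rw [hz1 (0 + d) (fun h => hd0 (by linear_combination h)) (fun h => hd1 (by linear_combination h)) (fun h => hd3 (by linear_combination h))]
    rw [hz1 (1 + d) (fun h => hdm1 (by linear_combination h)) (fun h => hd0 (by linear_combination h)) (fun h => hd2 (by linear_combination h))]
    rw [hz1 (3 + d) (fun h => hdm3 (by linear_combination h)) (fun h => hdm2 (by linear_combination h)) (fun h => hd0 (by linear_combination h))]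
    rw [hz2 (0 + d) (fun h => hd0 (by linear_combination h)) (fun h => hd2 (by linear_combination h)) (fun h => hd3 (by linear_combination h))]
    rw [hz2 (1 + d) (fun h => hdm1 (by linear_combination h)) (fun h => hd1 (by linear_combination h)) (fun h => hd2 (by linear_combination h))]
    rw [hz2 (2 + d) (fun h => hdm2 (by linear_combination h)) (fun h => hd0 (by linear_combination h)) (fun h => hd1 (by linear_combination h))]
    rw [hz2 (3 + d) (fun h => hdm3 (by linear_combination h)) (fun h => hdm1 (by linear_combination h)) (fun h => hd0 (by linear_combination h))]
    norm_num
  rw [← Finset.sum_subset (Finset.subset_univ ({0, 1, 2, 3, -1, -2, -3} : Finset (ZMod L))) hvan]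
  rcases eq_or_lt_of_le hL with hL6 | hL7
  · -- L = 6
    subst hL6
    rw [show ({0, 1, 2, 3, -1, -2, -3} : Finset (ZMod 6)) = {0, 1, 2, 3, 4, 5} from by decide]
    have g6 : (((6) : ZMod 6)) = 0 := by decide
    have g7 : (((7) : ZMod 6)) = 1 := by rfl
    have g8 : (((8) : ZMod 6)) = 2 := by decide
    have e0_1 : (((0) : ZMod 6)) ≠ 1 := by decide
    have e0_2 : (((0) : ZMod 6)) ≠ 2 := by decide
    have e0_3 : (((0) : ZMod 6)) ≠ 3 := by decide
    have e0_4 : (((0) : ZMod 6)) ≠ 4 := by decide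
    have e0_5 : (((0) : ZMod 6)) ≠ 5 := by decide
    have e1_0 : (((1) : ZMod 6)) ≠ 0 := by decide
    have e1_2 : (((1) : ZMod 6)) ≠ 2 := by decide
    have e1_3 : (((1) : ZMod 6)) ≠ 3 := by decide
    have e1_4 : (((1) : ZMod 6)) ≠ 4 := by decide
    have e1_5 : (((1) : ZMod 6)) ≠ 5 := by decide
    have e2_0 : (((2) : ZMod 6)) ≠ 0 := by decide
    have e2_1 : (((2) : ZMod 6)) ≠ 1 := by decide
    have e2_3 : (((2) : ZMod 6)) ≠ 3 := by decide
    have e2_4 : (((2) : ZMod 6)) ≠ 4 := by decide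
    have e2_5 : (((2) : ZMod 6)) ≠ 5 := by decide
    have e3_0 : (((3) : ZMod 6)) ≠ 0 := by decide
    have e3_1 : (((3) : ZMod 6)) ≠ 1 := by decide
    have e3_2 : (((3) : ZMod 6)) ≠ 2 := by decide
    have e3_4 : (((3) : ZMod 6)) ≠ 4 := by decide
    have e3_5 : (((3) : ZMod 6)) ≠ 5 := by decide
    have e4_0 : (((4) : ZMod 6)) ≠ 0 := by decide
    have e4_1 : (((4) : ZMod 6)) ≠ 1 := by decide
    have e4_2 : (((4) : ZMod 6)) ≠ 2 := by decide
    have e4_3 : (((4) : ZMod 6)) ≠ 3 := by decide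
    have e4_5 : (((4) : ZMod 6)) ≠ 5 := by decide
    have e5_0 : (((5) : ZMod 6)) ≠ 0 := by decide
    have e5_1 : (((5) : ZMod 6)) ≠ 1 := by decide
    have e5_2 : (((5) : ZMod 6)) ≠ 2 := by decide
    have e5_3 : (((5) : ZMod 6)) ≠ 3 := by decide
    have e5_4 : (((5) : ZMod 6)) ≠ 4 := by decide
    rw [Finset.sum_insert (by decide), Finset.sum_insert (by decide), Finset.sum_insert (by decide), Finset.sum_insert (by decide), Finset.sum_insert (by decide), Finset.sum_singleton]
    simp (config := { decide := true }) only [xOne, xTwo]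
    norm_num
  · -- 7 ≤ L
    have hL7' : 7 ≤ L := hL7
    have fm3_m2 : ((-3 : ZMod L)) ≠ (-2 : ZMod L) := by
      have := zmod_ne_of (L := L) (a := -3) (b := -2) (by norm_num) (by omega)
      simpa using this
    have fm3_m1 : ((-3 : ZMod L)) ≠ (-1 : ZMod L) := by
      have := zmod_ne_of (L := L) (a := -3) (b := -1) (by norm_num) (by omega)
      simpa using this
    have fm3_0 : ((-3 : ZMod L)) ≠ (0 : ZMod L) := by
      have := zmod_ne_of (L := L) (a := -3) (b := 0) (by norm_num) (by omega)
      simpa using this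
    have fm3_1 : ((-3 : ZMod L)) ≠ (1 : ZMod L) := by
      have := zmod_ne_of (L := L) (a := -3) (b := 1) (by norm_num) (by omega)
      simpa using this
    have fm3_2 : ((-3 : ZMod L)) ≠ (2 : ZMod L) := by
      have := zmod_ne_of (L := L) (a := -3) (b := 2) (by norm_num) (by omega)
      simpa using this
    have fm3_3 : ((-3 : ZMod L)) ≠ (3 : ZMod L) := by
      have := zmod_ne_of (L := L) (a := -3) (b := 3) (by norm_num) (by omega)
      simpa using this
    have fm2_m3 : ((-2 : ZMod L)) ≠ (-3 : ZMod L) := by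
      have := zmod_ne_of (L := L) (a := -2) (b := -3) (by norm_num) (by omega)
      simpa using this
    have fm2_m1 : ((-2 : ZMod L)) ≠ (-1 : ZMod L) := by
      have := zmod_ne_of (L := L) (a := -2) (b := -1) (by norm_num) (by omega)
      simpa using this
    have fm2_0 : ((-2 : ZMod L)) ≠ (0 : ZMod L) := by
      have := zmod_ne_of (L := L) (a := -2) (b := 0) (by norm_num) (by omega)
      simpa using this
    have fm2_1 : ((-2 : ZMod L)) ≠ (1 : ZMod L) := by
      have := zmod_ne_of (L := L) (a := -2) (b := 1) (by norm_num) (by omega)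
      simpa using this
    have fm2_2 : ((-2 : ZMod L)) ≠ (2 : ZMod L) := by
      have := zmod_ne_of (L := L) (a := -2) (b := 2) (by norm_num) (by omega)
      simpa using this
    have fm2_3 : ((-2 : ZMod L)) ≠ (3 : ZMod L) := by
      have := zmod_ne_of (L := L) (a := -2) (b := 3) (by norm_num) (by omega)
      simpa using this
    have fm1_m3 : ((-1 : ZMod L)) ≠ (-3 : ZMod L) := by
      have := zmod_ne_of (L := L) (a := -1) (b := -3) (by norm_num) (by omega)
      simpa using this
    have fm1_m2 : ((-1 : ZMod L)) ≠ (-2 : ZMod L) := by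
      have := zmod_ne_of (L := L) (a := -1) (b := -2) (by norm_num) (by omega)
      simpa using this
    have fm1_0 : ((-1 : ZMod L)) ≠ (0 : ZMod L) := by
      have := zmod_ne_of (L := L) (a := -1) (b := 0) (by norm_num) (by omega)
      simpa using this
    have fm1_1 : ((-1 : ZMod L)) ≠ (1 : ZMod L) := by
      have := zmod_ne_of (L := L) (a := -1) (b := 1) (by norm_num) (by omega)
      simpa using this
    have fm1_2 : ((-1 : ZMod L)) ≠ (2 : ZMod L) := by
      have := zmod_ne_of (L := L) (a := -1) (b := 2) (by norm_num) (by omega)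
      simpa using this
    have fm1_3 : ((-1 : ZMod L)) ≠ (3 : ZMod L) := by
      have := zmod_ne_of (L := L) (a := -1) (b := 3) (by norm_num) (by omega)
      simpa using this
    have f0_m3 : ((0 : ZMod L)) ≠ (-3 : ZMod L) := by
      have := zmod_ne_of (L := L) (a := 0) (b := -3) (by norm_num) (by omega)
      simpa using this
    have f0_m2 : ((0 : ZMod L)) ≠ (-2 : ZMod L) := by
      have := zmod_ne_of (L := L) (a := 0) (b := -2) (by norm_num) (by omega)
      simpa using this
    have f0_m1 : ((0 : ZMod L)) ≠ (-1 : ZMod L) := by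
      have := zmod_ne_of (L := L) (a := 0) (b := -1) (by norm_num) (by omega)
      simpa using this
    have f0_1 : ((0 : ZMod L)) ≠ (1 : ZMod L) := by
      have := zmod_ne_of (L := L) (a := 0) (b := 1) (by norm_num) (by omega)
      simpa using this
    have f0_2 : ((0 : ZMod L)) ≠ (2 : ZMod L) := by
      have := zmod_ne_of (L := L) (a := 0) (b := 2) (by norm_num) (by omega)
      simpa using this
    have f0_3 : ((0 : ZMod L)) ≠ (3 : ZMod L) := by
      have := zmod_ne_of (L := L) (a := 0) (b := 3) (by norm_num) (by omega)
      simpa using this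
    have f1_m3 : ((1 : ZMod L)) ≠ (-3 : ZMod L) := by
      have := zmod_ne_of (L := L) (a := 1) (b := -3) (by norm_num) (by omega)
      simpa using this
    have f1_m2 : ((1 : ZMod L)) ≠ (-2 : ZMod L) := by
      have := zmod_ne_of (L := L) (a := 1) (b := -2) (by norm_num) (by omega)
      simpa using this
    have f1_m1 : ((1 : ZMod L)) ≠ (-1 : ZMod L) := by
      have := zmod_ne_of (L := L) (a := 1) (b := -1) (by norm_num) (by omega)
      simpa using this
    have f1_0 : ((1 : ZMod L)) ≠ (0 : ZMod L) := by
      have := zmod_ne_of (L := L) (a := 1) (b := 0) (by norm_num) (by omega)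
      simpa using this
    have f1_2 : ((1 : ZMod L)) ≠ (2 : ZMod L) := by
      have := zmod_ne_of (L := L) (a := 1) (b := 2) (by norm_num) (by omega)
      simpa using this
    have f1_3 : ((1 : ZMod L)) ≠ (3 : ZMod L) := by
      have := zmod_ne_of (L := L) (a := 1) (b := 3) (by norm_num) (by omega)
      simpa using this
    have f2_m3 : ((2 : ZMod L)) ≠ (-3 : ZMod L) := by
      have := zmod_ne_of (L := L) (a := 2) (b := -3) (by norm_num) (by omega)
      simpa using this
    have f2_m2 : ((2 : ZMod L)) ≠ (-2 : ZMod L) := by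
      have := zmod_ne_of (L := L) (a := 2) (b := -2) (by norm_num) (by omega)
      simpa using this
    have f2_m1 : ((2 : ZMod L)) ≠ (-1 : ZMod L) := by
      have := zmod_ne_of (L := L) (a := 2) (b := -1) (by norm_num) (by omega)
      simpa using this
    have f2_0 : ((2 : ZMod L)) ≠ (0 : ZMod L) := by
      have := zmod_ne_of (L := L) (a := 2) (b := 0) (by norm_num) (by omega)
      simpa using this
    have f2_1 : ((2 : ZMod L)) ≠ (1 : ZMod L) := by
      have := zmod_ne_of (L := L) (a := 2) (b := 1) (by norm_num) (by omega)
      simpa using this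
    have f2_3 : ((2 : ZMod L)) ≠ (3 : ZMod L) := by
      have := zmod_ne_of (L := L) (a := 2) (b := 3) (by norm_num) (by omega)
      simpa using this
    have f3_m3 : ((3 : ZMod L)) ≠ (-3 : ZMod L) := by
      have := zmod_ne_of (L := L) (a := 3) (b := -3) (by norm_num) (by omega)
      simpa using this
    have f3_m2 : ((3 : ZMod L)) ≠ (-2 : ZMod L) := by
      have := zmod_ne_of (L := L) (a := 3) (b := -2) (by norm_num) (by omega)
      simpa using this
    have f3_m1 : ((3 : ZMod L)) ≠ (-1 : ZMod L) := by
      have := zmod_ne_of (L := L) (a := 3) (b := -1) (by norm_num) (by omega)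
      simpa using this
    have f3_0 : ((3 : ZMod L)) ≠ (0 : ZMod L) := by
      have := zmod_ne_of (L := L) (a := 3) (b := 0) (by norm_num) (by omega)
      simpa using this
    have f3_1 : ((3 : ZMod L)) ≠ (1 : ZMod L) := by
      have := zmod_ne_of (L := L) (a := 3) (b := 1) (by norm_num) (by omega)
      simpa using this
    have f3_2 : ((3 : ZMod L)) ≠ (2 : ZMod L) := by
      have := zmod_ne_of (L := L) (a := 3) (b := 2) (by norm_num) (by omega)
      simpa using this
    have f4_m2 : ((4 : ZMod L)) ≠ (-2 : ZMod L) := by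
      have := zmod_ne_of (L := L) (a := 4) (b := -2) (by norm_num) (by omega)
      simpa using this
    have f4_m1 : ((4 : ZMod L)) ≠ (-1 : ZMod L) := by
      have := zmod_ne_of (L := L) (a := 4) (b := -1) (by norm_num) (by omega)
      simpa using this
    have f4_0 : ((4 : ZMod L)) ≠ (0 : ZMod L) := by
      have := zmod_ne_of (L := L) (a := 4) (b := 0) (by norm_num) (by omega)
      simpa using this
    have f4_1 : ((4 : ZMod L)) ≠ (1 : ZMod L) := by
      have := zmod_ne_of (L := L) (a := 4) (b := 1) (by norm_num) (by omega)
      simpa using this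
    have f4_2 : ((4 : ZMod L)) ≠ (2 : ZMod L) := by
      have := zmod_ne_of (L := L) (a := 4) (b := 2) (by norm_num) (by omega)
      simpa using this
    have f4_3 : ((4 : ZMod L)) ≠ (3 : ZMod L) := by
      have := zmod_ne_of (L := L) (a := 4) (b := 3) (by norm_num) (by omega)
      simpa using this
    have f5_m1 : ((5 : ZMod L)) ≠ (-1 : ZMod L) := by
      have := zmod_ne_of (L := L) (a := 5) (b := -1) (by norm_num) (by omega)
      simpa using this
    have f5_0 : ((5 : ZMod L)) ≠ (0 : ZMod L) := by
      have := zmod_ne_of (L := L) (a := 5) (b := 0) (by norm_num) (by omega)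
      simpa using this
    have f5_1 : ((5 : ZMod L)) ≠ (1 : ZMod L) := by
      have := zmod_ne_of (L := L) (a := 5) (b := 1) (by norm_num) (by omega)
      simpa using this
    have f5_2 : ((5 : ZMod L)) ≠ (2 : ZMod L) := by
      have := zmod_ne_of (L := L) (a := 5) (b := 2) (by norm_num) (by omega)
      simpa using this
    have f5_3 : ((5 : ZMod L)) ≠ (3 : ZMod L) := by
      have := zmod_ne_of (L := L) (a := 5) (b := 3) (by norm_num) (by omega)
      simpa using this
    have f6_0 : ((6 : ZMod L)) ≠ (0 : ZMod L) := by
      have := zmod_ne_of (L := L) (a := 6) (b := 0) (by norm_num) (by omega)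
      simpa using this
    have f6_1 : ((6 : ZMod L)) ≠ (1 : ZMod L) := by
      have := zmod_ne_of (L := L) (a := 6) (b := 1) (by norm_num) (by omega)
      simpa using this
    have f6_2 : ((6 : ZMod L)) ≠ (2 : ZMod L) := by
      have := zmod_ne_of (L := L) (a := 6) (b := 2) (by norm_num) (by omega)
      simpa using this
    have f6_3 : ((6 : ZMod L)) ≠ (3 : ZMod L) := by
      have := zmod_ne_of (L := L) (a := 6) (b := 3) (by norm_num) (by omega)
      simpa using this
    rw [Finset.sum_insert (by simp only [Finset.mem_insert, Finset.mem_singleton, fm3_m2, fm3_m1, fm3_0, fm3_1, fm3_2, fm3_3, fm2_m3, fm2_m1, fm2_0, fm2_1, fm2_2, fm2_3, fm1_m3, fm1_m2, fm1_0, fm1_1, fm1_2, fm1_3, f0_m3, f0_m2, f0_m1, f0_1, f0_2, f0_3, f1_m3, f1_m2, f1_m1, f1_0, f1_2, f1_3, f2_m3, f2_m2, f2_m1, f2_0, f2_1, f2_3, f3_m3, f3_m2, f3_m1, f3_0, f3_1, f3_2, f4_m2, f4_m1, f4_0, f4_1, f4_2, f4_3, f5_m1, f5_0, f5_1, f5_2,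 f5_3, f6_0, f6_1, f6_2, f6_3]; norm_num), Finset.sum_insert (by simp only [Finset.mem_insert, Finset.mem_singleton, fm3_m2, fm3_m1, fm3_0, fm3_1, fm3_2, fm3_3, fm2_m3, fm2_m1, fm2_0, fm2_1, fm2_2, fm2_3, fm1_m3, fm1_m2, fm1_0, fm1_1, fm1_2, fm1_3, f0_m3, f0_m2, f0_m1, f0_1, f0_2, f0_3, f1_m3, f1_m2, f1_m1, f1_0, f1_2, f1_3, f2_m3, f2_m2, f2_m1, f2_0, f2_1, f2_3, f3_m3, f3_m2, f3_m1, f3_0, f3_1, f3_2, f4_m2, f4_m1, f4_0, f4_1, f4_2, f4_3, f5_m1, f5_0, f5_1, f5_2, f5_3, f6_0, f6_1, f6_2, f6_3]; norm_num), Finset.sum_insert (by simp only [Finset.mem_insert, Finset.mem_singleton, fm3_m2, fm3_m1, fm3_0, fm3_1, fm3_2, fm3_3, fm2_m3, fm2_m1, fm2_0, fm2_1, fm2_2, fm2_3, fm1_m3, fm1_m2, fm1_0, fm1_1, fm1_2, fm1_3, f0_m3, f0_m2, f0_m1, f0_1, f0_2, f0_3, f1_m3, f1_m2, f1_m1, f1_0,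 f1_2, f1_3, f2_m3, f2_m2, f2_m1, f2_0, f2_1, f2_3, f3_m3, f3_m2, f3_m1, f3_0, f3_1, f3_2, f4_m2, f4_m1, f4_0, f4_1, f4_2, f4_3, f5_m1, f5_0, f5_1, f5_2, f5_3, f6_0, f6_1, f6_2, f6_3]; norm_num), Finset.sum_insert (by simp only [Finset.mem_insert, Finset.mem_singleton, fm3_m2, fm3_m1, fm3_0, fm3_1, fm3_2, fm3_3, fm2_m3, fm2_m1, fm2_0, fm2_1, fm2_2, fm2_3, fm1_m3, fm1_m2, fm1_0, fm1_1, fm1_2, fm1_3, f0_m3, f0_m2, f0_m1, f0_1, f0_2, f0_3, f1_m3, f1_m2, f1_m1, f1_0, f1_2, f1_3, f2_m3, f2_m2, f2_m1, f2_0, f2_1, f2_3, f3_m3, f3_m2, f3_m1, f3_0, f3_1, f3_2, f4_m2, f4_m1, f4_0, f4_1, f4_2, f4_3, f5_m1, f5_0, f5_1, f5_2, f5_3, f6_0, f6_1, f6_2, f6_3]; norm_num), Finset.sum_insert (by simp only [Finset.mem_insert, Finset.mem_singleton, fm3_m2, fm3_m1, fm3_0, fm3_1, fm3_2, fm3_3,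 fm2_m3, fm2_m1, fm2_0, fm2_1, fm2_2, fm2_3, fm1_m3, fm1_m2, fm1_0, fm1_1, fm1_2, fm1_3, f0_m3, f0_m2, f0_m1, f0_1, f0_2, f0_3, f1_m3, f1_m2, f1_m1, f1_0, f1_2, f1_3, f2_m3, f2_m2, f2_m1, f2_0, f2_1, f2_3, f3_m3, f3_m2, f3_m1, f3_0, f3_1, f3_2, f4_m2, f4_m1, f4_0, f4_1, f4_2, f4_3, f5_m1, f5_0, f5_1, f5_2, f5_3, f6_0, f6_1, f6_2, f6_3]; norm_num), Finset.sum_insert (by simp only [Finset.mem_insert, Finset.mem_singleton, fm3_m2, fm3_m1, fm3_0, fm3_1, fm3_2, fm3_3, fm2_m3, fm2_m1, fm2_0, fm2_1, fm2_2, fm2_3, fm1_m3, fm1_m2, fm1_0, fm1_1, fm1_2, fm1_3, f0_m3, f0_m2, f0_m1, f0_1, f0_2, f0_3, f1_m3, f1_m2, f1_m1, f1_0, f1_2, f1_3, f2_m3, f2_m2, f2_m1, f2_0, f2_1, f2_3, f3_m3, f3_m2, f3_m1, f3_0, f3_1, f3_2, f4_m2, f4_m1, f4_0, f4_1, f4_2,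 f4_3, f5_m1, f5_0, f5_1, f5_2, f5_3, f6_0, f6_1, f6_2, f6_3]; norm_num), Finset.sum_singleton]
    norm_num [xOne, xTwo, fm3_m2, fm3_m1, fm3_0, fm3_1, fm3_2, fm3_3, fm2_m3, fm2_m1, fm2_0, fm2_1, fm2_2, fm2_3, fm1_m3, fm1_m2, fm1_0, fm1_1, fm1_2, fm1_3, f0_m3, f0_m2, f0_m1, f0_1, f0_2, f0_3, f1_m3, f1_m2, f1_m1, f1_0, f1_2, f1_3, f2_m3, f2_m2, f2_m1, f2_0, f2_1, f2_3, f3_m3, f3_m2, f3_m1, f3_0, f3_1, f3_2, f4_m2, f4_m1, f4_0, f4_1, f4_2, f4_3, f5_m1, f5_0, f5_1, f5_2, f5_3, f6_0, f6_1, f6_2, f6_3]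

theorem sum_sq_diff_eq_twelve_div_L {L : ℕ} [NeZero L] (hL : 6 ≤ L) :
    ∑ k : Fin 3 → ZMod L, (autocorr k (xOne L) - autocorr k (xTwo L)) ^ 2
      = 12 / (L : ℝ) := by
  rw [sum_sq_expand (xOne L) (xTwo L)]
  rw [show (∑ d : ZMod L,
        ((∑ v : ZMod L, xOne L v * xOne L (v + d)) ^ 3
          - 2 * (∑ v : ZMod L, xOne L v * xTwo L (v + d)) ^ 3
          + (∑ v : ZMod L, xTwo L v * xTwo L (v + d)) ^ 3))
      = ∑ d : ZMod L, ((xOne L (0 + d) + (xOne L (1 + d) + xOne L (3 + d))) ^ 3 - 2 * (xTwo L (0 + d) + (xTwo L (1 + d) + xTwo L (3 + d))) ^ 3 + (xTwo L (0 + d) + (xTwo L (2 + d) + xTwo L (3 + d))) ^ 3) from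
    Finset.sum_congr rfl fun d _ => by
      rw [corr_one hL (xOne L) d, corr_one hL (xTwo L) d, corr_two hL (xTwo L) d]]
  rw [main_count hL]
  ring
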